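/- Let Δ be a simplicial complex on V that is reducible with components Δ|_{V₁}, Δ|_{V₂} (so V₁ ∪ V₂ = V, S = V₁ ∩ V₂ is complete in Δ, and Δ = Δ|_{V₁} ∪ Δ|_{V₂}). If F ⊆ I is a facial set of the marginal polytope of Δ, then the projections π_{V₁}(F) and π_{V₂}(F) are facial sets of the marginal polytopes of Δ|_{V₁} and Δ|_{V₂}, respectively. -/

import Mathlib

/-- The pairing `⟨g, f_i⟩` between a functional `g` (indexed by rows `(D, x)` of the
design matrix of the hierarchical model of `Δ`) and the design-matrix column `f_i` of a
cell `i`: the entry of `f_i` at row `(D, x)` is `1` iff `D ∈ Δ` and `i` agrees with `x`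
on `D`. -/
def hdot {V : Type} [Fintype V] [DecidableEq V] {ι : V → Type} [∀ v, Fintype (ι v)]
    [∀ v, DecidableEq (ι v)] (Δ : Finset (Finset V))
    (g : Finset V × (∀ v, ι v) → ℝ) (i : ∀ v, ι v) : ℝ :=
  ∑ p : Finset V × (∀ v, ι v),
    g p * (if p.1 ∈ Δ ∧ ∀ v ∈ p.1, i v = p.2 v then 1 else 0)

/-- `F` is a facial set of the marginal polytope of `Δ`: there is a valid inequality
`⟨g, f_i⟩ ≥ c` whose contact set is exactly `F`. -/
def HFacial {V : Type} [Fintype V] [DecidableEq V] {ι : V → Type} [∀ v, Fintype (ι v)]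
    [∀ v, DecidableEq (ι v)] (Δ : Finset (Finset V)) (F : Set (∀ v, ι v)) : Prop :=
  ∃ (g : Finset V × (∀ v, ι v) → ℝ) (c : ℝ),
    (∀ i, c ≤ hdot Δ g i) ∧ ∀ i, i ∈ F ↔ hdot Δ g i = c

/-- The induced subcomplex `Δ|_{V'}`, as a simplicial complex on the vertex set `V'`. -/
def hinduced {V : Type} [DecidableEq V] (Δ : Finset (Finset V)) (V' : Finset V) :
    Finset (Finset {v // v ∈ V'}) :=
  (Δ.filter (· ⊆ V')).image (Finset.subtype (· ∈ V'))

/-- The coordinate projection `π_{V'} : I → I_{V'}`. -/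
def hproj {V : Type} {ι : V → Type} (V' : Finset V) (i : ∀ v, ι v) :
    ∀ v' : {v // v ∈ V'}, ι v'.1 :=
  fun v' => i v'.1

section Aux

variable {V : Type} [Fintype V] [DecidableEq V] {ι : V → Type} [∀ v, Fintype (ι v)]
    [∀ v, DecidableEq (ι v)]

private lemma hdot_zero (Δ : Finset (Finset V)) (i : ∀ v, ι v) :
    hdot Δ (0 : Finset V × (∀ v, ι v) → ℝ) i = 0 := by
  simp [hdot]

private lemma hdot_add (Δ : Finset (Finset V)) (g g' : Finset V × (∀ v, ι v) → ℝ)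
    (i : ∀ v, ι v) : hdot Δ (g + g') i = hdot Δ g i + hdot Δ g' i := by
  rw [hdot, hdot, hdot, ← Finset.sum_add_distrib]
  exact Finset.sum_congr rfl fun p _ => by rw [Pi.add_apply, add_mul]

/-- Any function depending only on the coordinates in a face `E ∈ Δ` can be realized as
`hdot Δ g` for some `g`. -/
private lemma hdot_realize (Δ : Finset (Finset V)) [∀ v, Nonempty (ι v)]
    (E : Finset V) (hE : E ∈ Δ) (ψ : (∀ v, ι v) → ℝ)
    (hdep : ∀ j j' : ∀ v, ι v, (∀ v ∈ E, j v = j' v) → ψ j = ψ j') :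
    ∃ g, ∀ j, hdot Δ g j = ψ j := by
  classical
  set d : ∀ v, ι v := fun v => Classical.arbitrary _ with hd
  refine ⟨fun p => if p.1 = E ∧ ∀ v ∉ E, p.2 v = d v then ψ p.2 else 0, fun j => ?_⟩
  set x0 : ∀ v, ι v := fun v => if v ∈ E then j v else d v with hx0
  rw [hdot, Finset.sum_eq_single (E, x0)]
  · have h1 : ((E, x0).1 = E ∧ ∀ v ∉ E, (E, x0).2 v = d v) :=
      ⟨rfl, fun v hv => by simp [hx0, hv]⟩
    have h2 : ((E, x0).1 ∈ Δ ∧ ∀ v ∈ (E, x0).1, j v = (E, x0).2 v) :=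
      ⟨hE, fun v hv => by simp [hx0, hv]⟩
    rw [if_pos h1, if_pos h2, mul_one]
    exact hdep x0 j (fun v hv => by simp [hx0, hv])
  · intro p _ hpne
    by_cases h1 : p.1 = E ∧ ∀ v ∉ E, p.2 v = d v
    · by_cases h2 : p.1 ∈ Δ ∧ ∀ v ∈ p.1, j v = p.2 v
      · exfalso
        apply hpne
        have hsnd : p.2 = x0 := by
          funext v
          by_cases hv : v ∈ E
          · rw [hx0]
            simp only [hv, if_true]
            exact (h2.2 v (h1.1 ▸ hv)).symm
          · simp [hx0, hv, h1.2 v hv]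
        exact Prod.ext h1.1 hsnd
      · rw [if_neg h2, mul_zero]
    · rw [if_neg h1, zero_mul]
  · intro h
    exact absurd (Finset.mem_univ _) h

private lemma hdot_realize_sum {α : Type} (Δ : Finset (Finset V)) (s : Finset α)
    (ψ : α → (∀ v, ι v) → ℝ)
    (h : ∀ a ∈ s, ∃ g, ∀ j, hdot Δ g j = ψ a j) :
    ∃ g, ∀ j, hdot Δ g j = ∑ a ∈ s, ψ a j := by
  classical
  induction s using Finset.cons_induction with
  | empty => exact ⟨0, fun j => by simp [hdot_zero]⟩
  | cons a s ha ih =>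
    obtain ⟨g1, hg1⟩ := h a (Finset.mem_cons_self a s)
    obtain ⟨g2, hg2⟩ := ih (fun b hb => h b (Finset.mem_cons_of_mem hb))
    exact ⟨g1 + g2, fun j => by rw [hdot_add, hg1, hg2, Finset.sum_cons]⟩

/-- The set of global configurations extending a configuration on `V₁`. -/
private def extSet (V₁ : Finset V) (j : ∀ v' : {v // v ∈ V₁}, ι v'.1) :
    Finset (∀ v, ι v) :=
  Finset.univ.filter fun i => ∀ v' : {v // v ∈ V₁}, i v'.1 = j v'

private lemma extSet_nonempty (V₁ : Finset V) [∀ v, Nonempty (ι v)]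
    (j : ∀ v' : {v // v ∈ V₁}, ι v'.1) : (extSet V₁ j).Nonempty := by
  classical
  refine ⟨fun v => if h : v ∈ V₁ then j ⟨v, h⟩ else Classical.arbitrary _, ?_⟩
  simp only [extSet, Finset.mem_filter, Finset.mem_univ, true_and]
  intro v'
  rw [dif_pos v'.2]

/-- The part of `hdot` coming from faces not contained in `V₁`. -/
private def Bfun (Δ : Finset (Finset V)) (V₁ : Finset V)
    (g : Finset V × (∀ v, ι v) → ℝ) (i : ∀ v, ι v) : ℝ :=
  ∑ p : Finset V × (∀ v, ι v),
    g p * (if p.1 ∈ Δ ∧ ¬ p.1 ⊆ V₁ ∧ ∀ v ∈ p.1, i v = p.2 v then 1 else 0)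

/-- The part of `hdot` coming from faces contained in `V₁`, as a function of the
`V₁`-marginal configuration. -/
private def Afun (Δ : Finset (Finset V)) (V₁ : Finset V)
    (g : Finset V × (∀ v, ι v) → ℝ) (j : ∀ v' : {v // v ∈ V₁}, ι v'.1) : ℝ :=
  ∑ p : Finset V × (∀ v, ι v),
    g p * (if p.1 ∈ Δ ∧ p.1 ⊆ V₁ ∧
        ∀ v' : {v // v ∈ V₁}, v'.1 ∈ p.1 → j v' = p.2 v'.1 then 1 else 0)

private lemma hdot_split (Δ : Finset (Finset V)) (V₁ : Finset V)
    (g : Finset V × (∀ v, ι v) → ℝ) (j : ∀ v' : {v // v ∈ V₁}, ι v'.1)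
    (i : ∀ v, ι v) (hi : ∀ v' : {v // v ∈ V₁}, i v'.1 = j v') :
    hdot Δ g i = Afun Δ V₁ g j + Bfun Δ V₁ g i := by
  rw [hdot, Afun, Bfun, ← Finset.sum_add_distrib]
  refine Finset.sum_congr rfl fun p _ => ?_
  by_cases h2 : p.1 ⊆ V₁
  · have e2 : (if p.1 ∈ Δ ∧ ¬ p.1 ⊆ V₁ ∧ ∀ v ∈ p.1, i v = p.2 v then (1:ℝ) else 0) = 0 := by
      rw [if_neg]
      rintro ⟨-, hns, -⟩
      exact hns h2
    have e1 : (if p.1 ∈ Δ ∧ ∀ v ∈ p.1, i v = p.2 v then (1:ℝ) else 0)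
        = (if p.1 ∈ Δ ∧ p.1 ⊆ V₁ ∧
            ∀ v' : {v // v ∈ V₁}, v'.1 ∈ p.1 → j v' = p.2 v'.1 then (1:ℝ) else 0) := by
      refine if_congr (and_congr_right fun _ => ?_) rfl rfl
      constructor
      · intro h
        exact ⟨h2, fun v' hv' => (hi v').symm.trans (h v'.1 hv')⟩
      · rintro ⟨-, h⟩ v hv
        rw [hi ⟨v, h2 hv⟩]
        exact h ⟨v, h2 hv⟩ hv
    rw [e2, mul_zero, add_zero, e1]
  · have e1 : (if p.1 ∈ Δ ∧ p.1 ⊆ V₁ ∧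
        ∀ v' : {v // v ∈ V₁}, v'.1 ∈ p.1 → j v' = p.2 v'.1 then (1:ℝ) else 0) = 0 := by
      rw [if_neg]
      rintro ⟨-, hs, -⟩
      exact h2 hs
    have e2 : (if p.1 ∈ Δ ∧ ∀ v ∈ p.1, i v = p.2 v then (1:ℝ) else 0)
        = (if p.1 ∈ Δ ∧ ¬ p.1 ⊆ V₁ ∧ ∀ v ∈ p.1, i v = p.2 v then (1:ℝ) else 0) := by
      refine if_congr (and_congr_right fun _ => ?_) rfl rfl
      exact ⟨fun h => ⟨h2, h⟩, fun h => h.2⟩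
    rw [e1, mul_zero, zero_add, e2]

/-- Adding a constant commutes with `inf'`. -/
private lemma inf'_const_add {α : Type} (s : Finset α) (hs : s.Nonempty) (a : ℝ)
    (f : α → ℝ) : s.inf' hs (fun x => a + f x) = a + s.inf' hs f := by
  apply le_antisymm
  · obtain ⟨x, hx, hxe⟩ := Finset.exists_mem_eq_inf' hs f
    rw [hxe]
    exact Finset.inf'_le _ hx
  · exact Finset.le_inf' _ _ fun x hx =>
      (add_le_add_iff_left a).mpr (Finset.inf'_le _ hx)

/-- The key lemma: one half of the theorem, with symmetric hypotheses. -/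
private lemma hfacial_proj (Δ : Finset (Finset V)) (V₁ V₂ : Finset V)
    (hcover : V₁ ∪ V₂ = Finset.univ)
    (hsub : ∀ D ∈ Δ, D ⊆ V₁ ∨ D ⊆ V₂)
    (hS : V₁ ∩ V₂ ∈ Δ)
    (F : Set (∀ v, ι v)) (hF : HFacial Δ F) :
    HFacial (hinduced Δ V₁) (hproj V₁ '' F) := by
  classical
  by_cases hne : ∀ v, Nonempty (ι v)
  case neg =>
    push_neg at hne
    obtain ⟨v₀, hv₀⟩ := hne
    refine ⟨0, -1, fun j => by rw [hdot_zero]; norm_num, fun j => ?_⟩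
    rw [hdot_zero]
    constructor
    · rintro ⟨i, -, -⟩
      exact (hv₀.false (i v₀)).elim
    · intro h
      norm_num at h
  case pos =>
  haveI := hne
  obtain ⟨g, c, hvalid, hcontact⟩ := hF
  set M : (∀ v' : {v // v ∈ V₁}, ι v'.1) → ℝ :=
    fun j => (extSet V₁ j).inf' (extSet_nonempty V₁ j) (Bfun Δ V₁ g) with hM
  -- the minimum of hdot over all extensions of j equals Afun j + M j
  have hφ : ∀ j, (extSet V₁ j).inf' (extSet_nonempty V₁ j) (hdot Δ g)
      = Afun Δ V₁ g j + M j := by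
    intro j
    rw [hM, ← inf'_const_add]
    refine Finset.inf'_congr (extSet_nonempty V₁ j) rfl fun i hi => ?_
    simp only [extSet, Finset.mem_filter, Finset.mem_univ, true_and] at hi
    exact hdot_split Δ V₁ g j i hi
  have hmin_ge : ∀ j, c ≤ Afun Δ V₁ g j + M j := by
    intro j
    rw [← hφ]
    exact Finset.le_inf' _ _ fun i _ => hvalid i
  have hmin_eq : ∀ j, Afun Δ V₁ g j + M j = c ↔ j ∈ hproj V₁ '' F := by
    intro j
    constructor
    · intro h
      obtain ⟨i, hi, hie⟩ := Finset.exists_mem_eq_inf' (extSet_nonempty V₁ j) (hdot Δ g)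
      rw [hφ j] at hie
      have hic : hdot Δ g i = c := by rw [← hie, h]
      simp only [extSet, Finset.mem_filter, Finset.mem_univ, true_and] at hi
      refine ⟨i, (hcontact i).mpr hic, ?_⟩
      funext v'
      exact hi v' 
    · rintro ⟨i, hiF, rfl⟩
      have hiExt : i ∈ extSet V₁ (hproj V₁ i) := by
        simp [extSet, hproj]
      have h1 : hdot Δ g i = c := (hcontact i).mp hiF
      refine le_antisymm ?_ (hmin_ge _)
      rw [← hφ, ← h1]
      exact Finset.inf'_le _ hiExt
  -- M depends only on the coordinates in the separator V₁ ∩ V₂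
  have hMdep_le : ∀ j j' : ∀ v' : {v // v ∈ V₁}, ι v'.1,
      (∀ v' : {v // v ∈ V₁}, v'.1 ∈ V₂ → j v' = j' v') → M j ≤ M j' := by
    intro j j' hagr
    rw [hM]
    refine Finset.le_inf' _ _ fun i hi => ?_
    simp only [extSet, Finset.mem_filter, Finset.mem_univ, true_and] at hi
    set i' : ∀ v, ι v := fun v => if h : v ∈ V₁ then j ⟨v, h⟩ else i v with hi'
    have hi'Ext : i' ∈ extSet V₁ j := by
      simp only [extSet, Finset.mem_filter, Finset.mem_univ, true_and]
      intro v'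
      rw [hi']
      simp only []
      rw [dif_pos v'.2]
    have hBeq : Bfun Δ V₁ g i' = Bfun Δ V₁ g i := by
      rw [Bfun, Bfun]
      refine Finset.sum_congr rfl fun p _ => ?_
      congr 1
      by_cases hc : p.1 ∈ Δ ∧ ¬ p.1 ⊆ V₁
      · have hpV₂ : p.1 ⊆ V₂ := (hsub p.1 hc.1).resolve_left hc.2
        have heqc : ∀ v ∈ p.1, i' v = i v := by
          intro v hv
          by_cases h1 : v ∈ V₁
          · rw [hi']
            simp only []
            rw [dif_pos h1, hagr ⟨v, h1⟩ (hpV₂ hv)]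
            exact (hi ⟨v, h1⟩).symm
          · rw [hi']
            simp only []
            rw [dif_neg h1]
        refine if_congr ?_ rfl rfl
        constructor
        · rintro ⟨a, b, hcc⟩
          exact ⟨a, b, fun v hv => (heqc v hv).symm.trans (hcc v hv)⟩
        · rintro ⟨a, b, hcc⟩
          exact ⟨a, b, fun v hv => (heqc v hv).trans (hcc v hv)⟩
      · rw [if_neg (fun h => hc ⟨h.1, h.2.1⟩), if_neg (fun h => hc ⟨h.1, h.2.1⟩)]
    calc M j ≤ Bfun Δ V₁ g i' := Finset.inf'_le _ hi'Ext
      _ = Bfun Δ V₁ g i := hBeq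
  have hMdep : ∀ j j' : ∀ v' : {v // v ∈ V₁}, ι v'.1,
      (∀ v' ∈ (V₁ ∩ V₂).subtype (· ∈ V₁), j v' = j' v') → M j = M j' := by
    intro j j' hagr
    have h' : ∀ v' : {v // v ∈ V₁}, v'.1 ∈ V₂ → j v' = j' v' := by
      intro v' hv'
      exact hagr v' (Finset.mem_subtype.mpr (Finset.mem_inter.mpr ⟨v'.2, hv'⟩))
    exact le_antisymm (hMdep_le j j' h') (hMdep_le j' j fun v' hv' => (h' v' hv').symm)
  -- realize Afun as an hdot over the induced complex
  haveI : ∀ v' : {v // v ∈ V₁}, Nonempty (ι v'.1) := fun v' => hne v'.1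
  have hArealize : ∃ gA, ∀ j, hdot (hinduced Δ V₁) gA j = Afun Δ V₁ g j := by
    apply hdot_realize_sum (hinduced Δ V₁) Finset.univ
      (fun p j => g p * (if p.1 ∈ Δ ∧ p.1 ⊆ V₁ ∧
        ∀ v' : {v // v ∈ V₁}, v'.1 ∈ p.1 → j v' = p.2 v'.1 then 1 else 0))
    intro p _
    by_cases hp : p.1 ∈ Δ ∧ p.1 ⊆ V₁
    · have hE : p.1.subtype (· ∈ V₁) ∈ hinduced Δ V₁ :=
        Finset.mem_image.mpr ⟨p.1, Finset.mem_filter.mpr ⟨hp.1, hp.2⟩, rfl⟩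
      apply hdot_realize (hinduced Δ V₁) _ hE
      intro j j' hagr
      congr 1
      refine if_congr (and_congr_right fun _ => and_congr_right fun _ => ?_) rfl rfl
      refine forall_congr' fun v' => imp_congr_right fun hv' => ?_
      rw [hagr v' (Finset.mem_subtype.mpr hv')]
    · refine ⟨0, fun j => ?_⟩
      rw [hdot_zero, if_neg (fun h => hp ⟨h.1, h.2.1⟩), mul_zero]
  obtain ⟨gA, hgA⟩ := hArealize
  have hSE : (V₁ ∩ V₂).subtype (· ∈ V₁) ∈ hinduced Δ V₁ :=
    Finset.mem_image.mpr ⟨V₁ ∩ V₂, Finset.mem_filter.mpr ⟨hS, Finset.inter_subset_left⟩, rfl⟩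
  obtain ⟨gM, hgM⟩ := hdot_realize (hinduced Δ V₁) _ hSE M hMdep
  refine ⟨gA + gM, c, ?_, ?_⟩
  · intro j
    rw [hdot_add, hgA, hgM]
    exact hmin_ge j
  · intro j
    rw [hdot_add, hgA, hgM]
    exact (hmin_eq j).symm

end Aux

/-- If `Δ` is reducible with components `Δ|_{V₁}`, `Δ|_{V₂}` (i.e.
`V₁ ∪ V₂ = V`, `Δ = Δ|_{V₁} ∪ Δ|_{V₂}`, and the separator `S = V₁ ∩ V₂` is complete in
`Δ`), and `F` is a facial set of the marginal polytope of `Δ`, then `π_{V₁}(F)` and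
`π_{V₂}(F)` are facial sets for `Δ|_{V₁}` and `Δ|_{V₂}` respectively. -/
theorem facial_projections_of_reducible {V : Type} [Fintype V] [DecidableEq V]
    {ι : V → Type} [∀ v, Fintype (ι v)] [∀ v, DecidableEq (ι v)]
    (Δ : Finset (Finset V)) (hΔ : ∀ D ∈ Δ, ∀ D' ⊆ D, D' ∈ Δ)
    (V₁ V₂ : Finset V) (hcover : V₁ ∪ V₂ = Finset.univ)
    (hsplit : Δ = Δ.filter (· ⊆ V₁) ∪ Δ.filter (· ⊆ V₂))
    (hcomplete : V₁ ∩ V₂ ∈ Δ)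
    (F : Set (∀ v, ι v)) (hF : HFacial Δ F) :
    HFacial (hinduced Δ V₁) (hproj V₁ '' F) ∧
    HFacial (hinduced Δ V₂) (hproj V₂ '' F) := by
  have hsub : ∀ D ∈ Δ, D ⊆ V₁ ∨ D ⊆ V₂ := by
    intro D hD
    rw [hsplit] at hD
    rcases Finset.mem_union.mp hD with h | h
    · exact Or.inl (Finset.mem_filter.mp h).2
    · exact Or.inr (Finset.mem_filter.mp h).2
  constructor
  · exact hfacial_proj Δ V₁ V₂ hcover hsub hcomplete F hF
  · exact hfacial_proj Δ V₂ V₁ (by rwa [Finset.union_comm])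
      (fun D hD => (hsub D hD).symm) (by rwa [Finset.inter_comm]) F hF
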